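/- Let n ≥ 1 be an integer, 0 < R₂ < R₁, p > 2 a real number, and let f⁺ : [R₂,R₁] → ℝ be continuous with f⁺(r) > 0 for all r ∈ [R₂,R₁] and satisfying the normalized balance condition ∫_{R₂}^{R₁} f⁺(r)r^{n−1} dr = Γ(n/2)/(2π^{n/2}). For t ∈ ℝ and ρ ∈ [R₂,R₁] define F(ρ,t) := (t·R₂ⁿ − ∫_{R₂}^ρ f⁺(r)r^{n−1} dr)/ρⁿ, and define M_p(t) := ∫_{R₂}^{R₁} sgn(F(ρ,t))·|F(ρ,t)·ρ|^{1/(p−1)} dρ. Then there exists a unique C_p with M_p(C_p) = 0, and it satisfies 0 < C_p < Γ(n/2)/(2π^{n/2}R₂ⁿ). -/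
import Mathlib

open Set MeasureTheory intervalIntegral

noncomputable def phiAux (α : ℝ) (s : ℝ) : ℝ := Real.sign s * |s| ^ α

lemma phiAux_of_nonneg {α s : ℝ} (hα : 0 < α) (hs : 0 ≤ s) : phiAux α s = s ^ α := by
  rcases eq_or_lt_of_le hs with h | h
  · simp [phiAux, ← h, Real.zero_rpow hα.ne']
  · rw [phiAux, Real.sign_of_pos h, abs_of_pos h, one_mul]

lemma phiAux_of_nonpos {α s : ℝ} (hα : 0 < α) (hs : s ≤ 0) : phiAux α s = -((-s) ^ α) := by
  rcases eq_or_lt_of_le hs with h | h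
  · simp [phiAux, h, Real.zero_rpow hα.ne']
  · rw [phiAux, Real.sign_of_neg h, abs_of_neg h, neg_one_mul]

lemma phiAux_pos {α s : ℝ} (hα : 0 < α) (hs : 0 < s) : 0 < phiAux α s := by
  rw [phiAux_of_nonneg hα hs.le]; exact Real.rpow_pos_of_pos hs α

lemma phiAux_neg {α s : ℝ} (hα : 0 < α) (hs : s < 0) : phiAux α s < 0 := by
  rw [phiAux_of_nonpos hα hs.le]
  have := Real.rpow_pos_of_pos (neg_pos.2 hs) α
  linarith

lemma phiAux_strictMono {α : ℝ} (hα : 0 < α) : StrictMono (phiAux α) := by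
  intro s t hst
  rcases le_or_gt 0 s with hs | hs
  · rw [phiAux_of_nonneg hα hs, phiAux_of_nonneg hα (hs.trans hst.le)]
    exact Real.rpow_lt_rpow hs hst hα
  · rcases le_or_gt t 0 with ht | ht
    · rw [phiAux_of_nonpos hα hs.le, phiAux_of_nonpos hα ht]
      have := Real.rpow_lt_rpow (neg_nonneg.2 ht) (neg_lt_neg hst) hα
      linarith
    · exact (phiAux_neg hα hs).trans (phiAux_pos hα ht)

lemma phiAux_continuous {α : ℝ} (hα : 0 < α) : Continuous (phiAux α) := by
  have h : phiAux α = fun s => (max s 0) ^ α - (max (-s) 0) ^ α := by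
    funext s
    rcases le_or_gt 0 s with hs | hs
    · rw [phiAux_of_nonneg hα hs, max_eq_left hs, max_eq_right (neg_nonpos.2 hs),
        Real.zero_rpow hα.ne', sub_zero]
    · rw [phiAux_of_nonpos hα hs.le, max_eq_right hs.le, max_eq_left (neg_nonneg.2 hs.le),
        Real.zero_rpow hα.ne', zero_sub]
  rw [h]
  exact ((Real.continuous_rpow_const hα.le).comp (continuous_id.max continuous_const)).sub
    ((Real.continuous_rpow_const hα.le).comp (continuous_neg.max continuous_const))

lemma sign_mul_abs_rpow {a ρ α : ℝ} (hα : 0 < α) (hρ : 0 < ρ) :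
    Real.sign a * |a * ρ| ^ α = phiAux α (a * ρ) := by
  rcases lt_trichotomy a 0 with h | h | h
  · rw [phiAux, Real.sign_of_neg h, Real.sign_of_neg (mul_neg_of_neg_of_pos h hρ)]
  · simp [phiAux, h, Real.zero_rpow hα.ne']
  · rw [phiAux, Real.sign_of_pos h, Real.sign_of_pos (mul_pos h hρ)]

/-- Existence and uniqueness of the free constant `C_p` in the annulus case of
Theorem 1.1: under the normalized balance condition
`∫_{R₂}^{R₁} f⁺(r)r^{n-1} dr = Γ(n/2)/(2π^{n/2})`, the map `M_p` has a unique zero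
`C_p`, and `0 < C_p < Γ(n/2)/(2π^{n/2}R₂ⁿ)`. -/
theorem Cp_exists_unique (n : ℕ) (hn : 1 ≤ n) (R₂ R₁ : ℝ)
    (hR₂ : 0 < R₂) (hR : R₂ < R₁) (p : ℝ) (hp : 2 < p)
    (f : ℝ → ℝ) (hf : ContinuousOn f (Set.Icc R₂ R₁))
    (hfpos : ∀ r ∈ Set.Icc R₂ R₁, 0 < f r)
    (hbal : ∫ r in R₂..R₁, f r * r ^ (n - 1) =
      Real.Gamma ((n : ℝ) / 2) / (2 * Real.pi ^ ((n : ℝ) / 2)))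
    (F : ℝ → ℝ → ℝ)
    (hF : ∀ ρ t, F ρ t = (t * R₂ ^ n - ∫ r in R₂..ρ, f r * r ^ (n - 1)) / ρ ^ n)
    (M : ℝ → ℝ)
    (hM : ∀ t, M t = ∫ ρ in R₂..R₁,
      Real.sign (F ρ t) * |F ρ t * ρ| ^ (1 / (p - 1))) :
    ∃ C : ℝ, (M C = 0 ∧ 0 < C ∧
        C < Real.Gamma ((n : ℝ) / 2) / (2 * Real.pi ^ ((n : ℝ) / 2) * R₂ ^ n)) ∧
      ∀ C' : ℝ, M C' = 0 → C' = C := by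
  have hα : 0 < 1 / (p - 1) := by
    have : 0 < p - 1 := by linarith
    positivity
  set α := 1 / (p - 1) with hαdef
  have hn' : (0 : ℝ) < n := by exact_mod_cast hn
  have hA : 0 < Real.Gamma ((n : ℝ) / 2) / (2 * Real.pi ^ ((n : ℝ) / 2)) :=
    div_pos (Real.Gamma_pos_of_pos (by positivity))
      (by have := Real.pi_pos; positivity)
  set A := Real.Gamma ((n : ℝ) / 2) / (2 * Real.pi ^ ((n : ℝ) / 2)) with hAdef
  have hle : R₂ ≤ R₁ := hR.le
  set g : ℝ → ℝ := Set.IccExtend hle ((Set.Icc R₂ R₁).restrict f) with hgdef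
  have hgc : Continuous g := continuous_IccExtend_iff.mpr hf.restrict
  have hg_eq : ∀ r ∈ Set.Icc R₂ R₁, g r = f r := fun r hr => by
    rw [hgdef, Set.IccExtend_of_mem _ _ hr]; rfl
  have hg_pos : ∀ r ∈ Set.Icc R₂ R₁, 0 < g r := fun r hr =>
    (hg_eq r hr) ▸ hfpos r hr
  set q : ℝ → ℝ := fun r => g r * r ^ (n - 1) with hq
  have hqc : Continuous q := hgc.mul (continuous_pow _)
  set G : ℝ → ℝ := fun ρ => ∫ r in R₂..ρ, q r with hGdef
  have hGc : Continuous G :=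
    intervalIntegral.continuous_primitive (fun a b => hqc.intervalIntegrable a b) R₂
  have hG_eq : ∀ ρ ∈ Set.Icc R₂ R₁, (∫ r in R₂..ρ, f r * r ^ (n - 1)) = G ρ := by
    intro ρ hρ
    apply intervalIntegral.integral_congr
    intro r hr
    rw [Set.uIcc_of_le hρ.1] at hr
    have hr' : r ∈ Set.Icc R₂ R₁ := ⟨hr.1, hr.2.trans hρ.2⟩
    simp only [hq, hg_eq r hr']
  have hG_mono : ∀ a b, R₂ ≤ a → a < b → b ≤ R₁ → G a < G b := by
    intro a b ha hab hb
    have h1 : (∫ r in R₂..a, q r) + ∫ r in a..b, q r = ∫ r in R₂..b, q r :=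
      intervalIntegral.integral_add_adjacent_intervals
        (hqc.intervalIntegrable R₂ a) (hqc.intervalIntegrable a b)
    have h2 : 0 < ∫ r in a..b, q r := by
      apply intervalIntegral_pos_of_pos_on (hqc.intervalIntegrable a b) _ hab
      intro x hx
      have hx' : x ∈ Set.Icc R₂ R₁ := ⟨ha.trans hx.1.le, hx.2.le.trans hb⟩
      have hxpos : 0 < x := lt_of_lt_of_le hR₂ hx'.1
      exact mul_pos (hg_pos x hx') (pow_pos hxpos _)
    have hGa : G a = ∫ r in R₂..a, q r := rfl
    have hGb : G b = ∫ r in R₂..b, q r := rfl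
    rw [hGa, hGb, ← h1]
    linarith
  have hGR₂ : G R₂ = 0 := by simp [hGdef]
  have hGR₁ : G R₁ = A := by rw [← hG_eq R₁ ⟨hle, le_refl R₁⟩, hbal]
  have hR₂n : (0 : ℝ) < R₂ ^ n := pow_pos hR₂ n
  set K := A / R₂ ^ n with hKdef
  have hK : 0 < K := div_pos hA hR₂n
  set D : ℝ → ℝ := fun ρ => (max ρ R₂) ^ n with hD
  have hDc : Continuous D := (continuous_id.max continuous_const).pow n
  have hDpos : ∀ ρ, 0 < D ρ :=
    fun ρ => pow_pos (lt_of_lt_of_le hR₂ (le_max_right ρ R₂)) n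
  have hDeq : ∀ ρ, R₂ ≤ ρ → D ρ = ρ ^ n := by
    intro ρ h
    simp only [hD, max_eq_left h]
  set H : ℝ → ℝ → ℝ := fun t ρ => phiAux α ((t * R₂ ^ n - G ρ) / D ρ * ρ) with hH
  have hHc : Continuous (Function.uncurry H) := by
    apply (phiAux_continuous hα).comp
    apply Continuous.mul _ continuous_snd
    apply Continuous.div _ (hDc.comp continuous_snd) (fun x => (hDpos x.2).ne')
    exact (continuous_fst.mul continuous_const).sub (hGc.comp continuous_snd)
  have hHcρ : ∀ t, Continuous (H t) := fun t =>
    hHc.comp (Continuous.prodMk_right t)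
  have hM' : ∀ t, M t = ∫ ρ in R₂..R₁, H t ρ := by
    intro t
    rw [hM t]
    apply intervalIntegral.integral_congr
    intro ρ hρ
    rw [Set.uIcc_of_le hle] at hρ
    have hρpos : 0 < ρ := lt_of_lt_of_le hR₂ hρ.1
    have hFval : F ρ t = (t * R₂ ^ n - G ρ) / D ρ := by
      rw [hF ρ t, hG_eq ρ hρ, hDeq ρ hρ.1]
    show Real.sign (F ρ t) * |F ρ t * ρ| ^ α = H t ρ
    rw [hFval]
    simp only [hH]
    exact sign_mul_abs_rpow hα hρpos
  have hMc : Continuous M := by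
    have heq : M = fun t => ∫ ρ in Set.Icc R₂ R₁, H t ρ := by
      funext t
      rw [hM' t, intervalIntegral.integral_of_le hle,
        ← MeasureTheory.integral_Icc_eq_integral_Ioc]
    rw [heq]
    exact continuous_parametric_integral_of_continuous hHc isCompact_Icc
  have hint : ∀ s, IntervalIntegrable (H s) volume R₂ R₁ :=
    fun s => (hHcρ s).intervalIntegrable _ _
  have hMmono : StrictMono M := by
    intro t t' htt'
    have key : 0 < ∫ ρ in R₂..R₁, (H t' ρ - H t ρ) := by
      apply intervalIntegral_pos_of_pos_on ((hint t').sub (hint t)) _ hR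
      intro x hx
      have hxpos : 0 < x := hR₂.trans hx.1
      have harg : (t * R₂ ^ n - G x) / D x * x < (t' * R₂ ^ n - G x) / D x * x := by
        apply mul_lt_mul_of_pos_right _ hxpos
        exact (div_lt_div_iff_of_pos_right (hDpos x)).mpr
          (sub_lt_sub_right (mul_lt_mul_of_pos_right htt' hR₂n) (G x))
      have h2 : H t x < H t' x := by
        simp only [hH]
        exact phiAux_strictMono hα harg
      linarith
    rw [intervalIntegral.integral_sub (hint t') (hint t)] at key
    rw [hM' t, hM' t']
    linarith
  have hM0 : M 0 < 0 := by
    have key : 0 < ∫ ρ in R₂..R₁, -H 0 ρ := by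
      apply intervalIntegral_pos_of_pos_on ((hHcρ 0).neg.intervalIntegrable _ _) _ hR
      intro x hx
      show 0 < -H 0 x
      have hGx : 0 < G x := by
        rw [← hGR₂]; exact hG_mono R₂ x le_rfl hx.1 hx.2.le
      have hxpos : 0 < x := hR₂.trans hx.1
      have hnum : (0 : ℝ) * R₂ ^ n - G x < 0 := by rw [zero_mul]; linarith
      have harg : (0 * R₂ ^ n - G x) / D x * x < 0 :=
        mul_neg_of_neg_of_pos (div_neg_of_neg_of_pos hnum (hDpos x)) hxpos
      have h2 : H 0 x < 0 := by
        simp only [hH]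
        exact phiAux_neg hα harg
      linarith
    rw [intervalIntegral.integral_neg] at key
    rw [hM' 0]
    linarith
  have hMK : 0 < M K := by
    rw [hM' K]
    apply intervalIntegral_pos_of_pos_on (hint K) _ hR
    intro x hx
    have hGx : G x < A := by
      rw [← hGR₁]; exact hG_mono x R₁ hx.1.le hx.2 le_rfl
    have hxpos : 0 < x := hR₂.trans hx.1
    have hKR : K * R₂ ^ n = A := div_mul_cancel₀ A hR₂n.ne'
    have hnum : 0 < K * R₂ ^ n - G x := by rw [hKR]; linarith
    have harg : 0 < (K * R₂ ^ n - G x) / D x * x :=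
      mul_pos (div_pos hnum (hDpos x)) hxpos
    simp only [hH]
    exact phiAux_pos hα harg
  have hsub : Set.Ioo (M 0) (M K) ⊆ M '' Set.Ioo 0 K :=
    intermediate_value_Ioo hK.le hMc.continuousOn
  obtain ⟨C, hCmem, hMC⟩ := hsub ⟨hM0, hMK⟩
  refine ⟨C, ⟨hMC, hCmem.1, ?_⟩, ?_⟩
  · have hKeq : K = Real.Gamma ((n : ℝ) / 2) / (2 * Real.pi ^ ((n : ℝ) / 2) * R₂ ^ n) := by
      rw [hKdef, hAdef, div_div]
    rw [← hKeq]
    exact hCmem.2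
  · intro C' hC'
    exact hMmono.injective (hC'.trans hMC.symm)
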